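/- Proposition 3.2 (structure of the trigonometric spectral curve): let x₁,…,x_N ∈ ℂ with sinh(x_i − x_j) ≠ 0 for i ≠ j, p₁,…,p_N ∈ ℂ, and a_i, b_i ∈ ℂˡ with b_i·a_i = 2. Set F_{ij} = b_i·a_j and define A by A_{ii} = p_i, A_{ij} = F_{ij}·coth(x_i − x_j) (i ≠ j). Then there exist polynomials R₀, R₁, …, R_l ∈ ℂ[k] with deg R_m ≤ N − m, and R₀(k) = det(2k·I + A) of degree exactly N, such that for all k, w ∈ ℂ one has det(2k·I + A − w·F) = Σ_{m=0}^{l} wᵐ·R_m(k). Moreover, for all k ∈ ℂ, det(2k·I + A + F) = det(2(k+2)·I + A − F). -/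

import Mathlib

open Matrix Finset Polynomial

lemma aux_degree_det_le {R : Type*} [CommRing R] {n : Type*} [DecidableEq n] [Fintype n]
    (M : Matrix n n (Polynomial R)) (h : ∀ i j, (M i j).degree ≤ 1) :
    M.det.degree ≤ (Fintype.card n : WithBot ℕ) := by
  rw [Matrix.det_apply']
  refine (Polynomial.degree_sum_le _ _).trans (Finset.sup_le fun σ _ => ?_)
  refine (Polynomial.degree_mul_le _ _).trans ?_
  have h1 : (Polynomial.degree ((Equiv.Perm.sign σ : ℤ) : Polynomial R)) ≤ 0 := Polynomial.degree_intCast_le _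
  have h2 : (∏ i, M (σ i) i).degree ≤ (Fintype.card n : WithBot ℕ) := by
    refine (Polynomial.degree_prod_le _ _).trans ?_
    calc ∑ i, (M (σ i) i).degree ≤ ∑ _i : n, ((1 : ℕ) : WithBot ℕ) :=
          Finset.sum_le_sum (fun i _ => by exact_mod_cast h _ _)
      _ = ((∑ _i : n, 1 : ℕ) : WithBot ℕ) := by rw [Nat.cast_sum]
      _ = (Fintype.card n : WithBot ℕ) := by simp
  calc ((Equiv.Perm.sign σ : ℤ) : Polynomial R).degree + (∏ i, M (σ i) i).degree ≤ 0 + (Fintype.card n : WithBot ℕ) :=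
        add_le_add h1 h2
    _ = _ := by rw [zero_add]

lemma aux_degree_prod_le_card {R : Type*} [CommRing R] {ι : Type*} (s : Finset ι)
    (e : ι → Polynomial (Polynomial R)) (hdeg : ∀ i ∈ s, (e i).degree ≤ 1) :
    (∏ i ∈ s, e i).degree ≤ (s.card : WithBot ℕ) := by
  refine (Polynomial.degree_prod_le _ _).trans ?_
  calc ∑ i ∈ s, (e i).degree ≤ ∑ _i ∈ s, ((1:ℕ) : WithBot ℕ) :=
        Finset.sum_le_sum (fun i hi => by exact_mod_cast hdeg i hi)
    _ = ((∑ _i ∈ s, 1 : ℕ) : WithBot ℕ) := by rw [Nat.cast_sum]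
    _ = (s.card : WithBot ℕ) := by simp

lemma aux_coeff_prod_eq_zero {R : Type*} [CommRing R] {ι : Type*} (s : Finset ι)
    (e : ι → Polynomial (Polynomial R)) (hdeg : ∀ i ∈ s, (e i).degree ≤ 1)
    {m : ℕ} (hm : s.card < m) :
    (∏ i ∈ s, e i).coeff m = 0 := by
  apply Polynomial.coeff_eq_zero_of_degree_lt
  refine lt_of_le_of_lt (aux_degree_prod_le_card s e hdeg) ?_
  exact_mod_cast hm

lemma aux_coeff_prod_degree {R : Type*} [CommRing R] {ι : Type*} (s : Finset ι) :
    ∀ (e : ι → Polynomial (Polynomial R)),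
    (∀ i ∈ s, ((e i).coeff 0).degree ≤ 1) →
    (∀ i ∈ s, ((e i).coeff 1).degree ≤ 0) →
    (∀ i ∈ s, (e i).degree ≤ 1) →
    ∀ m : ℕ, ((∏ i ∈ s, e i).coeff m).degree ≤ ((s.card - m : ℕ) : WithBot ℕ) := by
  induction s using Finset.cons_induction with
  | empty =>
      intro e h0 h1 hd m
      cases m with
      | zero => simp
      | succ m => simp [Polynomial.coeff_one]
  | cons i s hi ih =>
      intro e h0 h1 hd m
      rw [Finset.prod_cons, Polynomial.coeff_mul]
      refine (Polynomial.degree_sum_le _ _).trans (Finset.sup_le ?_)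
      rintro ⟨t, r⟩ hp
      rw [Finset.HasAntidiagonal.mem_antidiagonal] at hp
      simp only [Finset.card_cons]
      match t with
      | 0 =>
        by_cases hms : r ≤ s.card
        · refine (Polynomial.degree_mul_le _ _).trans ?_
          have b1 : ((e i).coeff 0).degree ≤ ((1:ℕ) : WithBot ℕ) := by
            exact_mod_cast h0 i (Finset.mem_cons_self i s)
          have b2 := ih e (fun j hj => h0 j (Finset.mem_cons_of_mem hj))
            (fun j hj => h1 j (Finset.mem_cons_of_mem hj))
            (fun j hj => hd j (Finset.mem_cons_of_mem hj)) r
          calc ((e i).coeff 0).degree + ((∏ j ∈ s, e j).coeff r).degree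
              ≤ ((1:ℕ) : WithBot ℕ) + ((s.card - r : ℕ) : WithBot ℕ) := add_le_add b1 b2
            _ = ((1 + (s.card - r) : ℕ) : WithBot ℕ) := by rw [Nat.cast_add]
            _ ≤ ((s.card + 1 - m : ℕ) : WithBot ℕ) := by
                have : 1 + (s.card - r) ≤ s.card + 1 - m := by omega
                exact_mod_cast this
        · have hz : (∏ j ∈ s, e j).coeff r = 0 :=
            aux_coeff_prod_eq_zero s e (fun j hj => hd j (Finset.mem_cons_of_mem hj))
              (by omega)
          rw [hz, mul_zero]
          simp
      | 1 =>
        refine (Polynomial.degree_mul_le _ _).trans ?_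
        have b1 : ((e i).coeff 1).degree ≤ ((0:ℕ) : WithBot ℕ) := by
          exact_mod_cast h1 i (Finset.mem_cons_self i s)
        have b2 := ih e (fun j hj => h0 j (Finset.mem_cons_of_mem hj))
          (fun j hj => h1 j (Finset.mem_cons_of_mem hj))
          (fun j hj => hd j (Finset.mem_cons_of_mem hj)) r
        calc ((e i).coeff 1).degree + ((∏ j ∈ s, e j).coeff r).degree
            ≤ ((0:ℕ) : WithBot ℕ) + ((s.card - r : ℕ) : WithBot ℕ) := add_le_add b1 b2
          _ = ((0 + (s.card - r) : ℕ) : WithBot ℕ) := by rw [Nat.cast_add]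
          _ ≤ ((s.card + 1 - m : ℕ) : WithBot ℕ) := by
              have : 0 + (s.card - r) ≤ s.card + 1 - m := by omega
              exact_mod_cast this
      | (t + 2) =>
        have hz : (e i).coeff (t + 2) = 0 := by
          apply Polynomial.coeff_eq_zero_of_degree_lt
          refine lt_of_le_of_lt (hd i (Finset.mem_cons_self i s)) ?_
          exact_mod_cast (by omega : (1:ℕ) < t + 2)
        rw [hz, zero_mul]
        simp

lemma aux_coeff_det_degree {R : Type*} [CommRing R] {n : Type*} [DecidableEq n] [Fintype n]
    (M : Matrix n n (Polynomial (Polynomial R)))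
    (h0 : ∀ i j, ((M i j).coeff 0).degree ≤ 1)
    (h1 : ∀ i j, ((M i j).coeff 1).degree ≤ 0)
    (hd : ∀ i j, (M i j).degree ≤ 1)
    (m : ℕ) : ((M.det).coeff m).degree ≤ ((Fintype.card n - m : ℕ) : WithBot ℕ) := by
  rw [Matrix.det_apply', Polynomial.finset_sum_coeff]
  refine (Polynomial.degree_sum_le _ _).trans (Finset.sup_le fun σ _ => ?_)
  have hc : (((Equiv.Perm.sign σ : ℤ) : Polynomial (Polynomial R)) * ∏ i, M (σ i) i).coeff m
      = ((Equiv.Perm.sign σ : ℤ) : Polynomial R) * (∏ i, M (σ i) i).coeff m := by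
    rw [← Polynomial.C_eq_intCast, Polynomial.coeff_C_mul]
  rw [hc]
  refine (Polynomial.degree_mul_le _ _).trans ?_
  have b1 : (((Equiv.Perm.sign σ : ℤ) : Polynomial R)).degree ≤ 0 := Polynomial.degree_intCast_le _
  have b2 : ((∏ i, M (σ i) i).coeff m).degree ≤ ((Finset.univ.card - m : ℕ) : WithBot ℕ) :=
    aux_coeff_prod_degree Finset.univ (fun i => M (σ i) i)
      (fun i _ => h0 _ _) (fun i _ => h1 _ _) (fun i _ => hd _ _) m
  rw [Finset.card_univ] at b2
  calc _ ≤ 0 + ((Fintype.card n - m : ℕ) : WithBot ℕ) := add_le_add b1 b2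
    _ = _ := by rw [zero_add]

lemma aux_rank_bound {K : Type*} [Field K] {N l : ℕ} (Xm : Matrix (Fin N) (Fin N) K)
    (B : Matrix (Fin N) (Fin l) K) (A' : Matrix (Fin l) (Fin N) K) (h : IsUnit Xm.det) :
    ((Matrix.of fun i j => Polynomial.C (Xm i j) - Polynomial.C ((B * A') i j) * Polynomial.X)
      : Matrix (Fin N) (Fin N) (Polynomial K)).det.degree ≤ (l : WithBot ℕ) := by
  set U : Matrix (Fin N) (Fin l) (Polynomial K) :=
    (-(Polynomial.X : Polynomial K)) • ((Xm⁻¹ * B).map Polynomial.C) with hU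
  set V : Matrix (Fin l) (Fin N) (Polynomial K) := A'.map Polynomial.C with hV
  have hinv : Xm * Xm⁻¹ = 1 := Matrix.mul_nonsing_inv Xm h
  have hUV : U * V
      = (-(Polynomial.X : Polynomial K)) • (((Xm⁻¹ * (B * A')).map Polynomial.C)) := by
    rw [hU, hV, Matrix.smul_mul, ← Matrix.map_mul, Matrix.mul_assoc]
  have hfact : ((Matrix.of fun i j =>
        Polynomial.C (Xm i j) - Polynomial.C ((B * A') i j) * Polynomial.X)
        : Matrix (Fin N) (Fin N) (Polynomial K))
      = (Xm.map Polynomial.C) * (1 + U * V) := by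
    rw [hUV, Matrix.mul_add, Matrix.mul_one, Matrix.mul_smul, ← Matrix.map_mul,
      ← Matrix.mul_assoc, hinv, Matrix.one_mul]
    apply Matrix.ext
    intro i j
    simp only [Matrix.of_apply, Matrix.add_apply, Matrix.smul_apply, Matrix.map_apply,
      smul_eq_mul]
    ring
  rw [hfact, Matrix.det_mul]
  have h1 : ((Xm.map Polynomial.C).det).degree ≤ 0 := by
    have hdq : (Xm.map Polynomial.C).det = Polynomial.C Xm.det :=
      (RingHom.map_det (Polynomial.C : K →+* Polynomial K) Xm).symm
    rw [hdq]
    exact Polynomial.degree_C_le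
  have h2 : (1 + U * V).det = (1 + V * U).det := Matrix.det_one_add_mul_comm U V
  have hVU : V * U
      = (-(Polynomial.X : Polynomial K)) • ((A' * (Xm⁻¹ * B)).map Polynomial.C) := by
    rw [hU, hV, Matrix.mul_smul, ← Matrix.map_mul]
  have h3 : ((1 + V * U).det).degree ≤ (l : WithBot ℕ) := by
    have := aux_degree_det_le (1 + V * U) (fun α β => ?_)
    · simpa using this
    · rw [hVU]
      refine (Polynomial.degree_add_le _ _).trans (max_le ?_ ?_)
      · refine le_trans ?_ (by norm_num : (0 : WithBot ℕ) ≤ 1)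
        by_cases hab : α = β
        · subst hab; show ((1 : Matrix (Fin l) (Fin l) (Polynomial K)) α α).degree ≤ 0; rw [Matrix.one_apply_eq]; exact Polynomial.degree_one_le
        · show ((1 : Matrix (Fin l) (Fin l) (Polynomial K)) α β).degree ≤ 0; rw [Matrix.one_apply_ne hab]; simp
      · show (((-(Polynomial.X : Polynomial K)) • ((A' * (Xm⁻¹ * B)).map Polynomial.C)) α β).degree ≤ 1
        rw [Matrix.smul_apply, Matrix.map_apply, smul_eq_mul, neg_mul]
        refine (Polynomial.degree_neg _).le.trans ?_
        refine (Polynomial.degree_mul_le _ _).trans ?_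
        refine le_trans (add_le_add Polynomial.degree_X_le Polynomial.degree_C_le) ?_
        norm_num
  refine (Polynomial.degree_mul_le _ _).trans ?_
  calc ((Xm.map Polynomial.C).det).degree + ((1 + U * V).det).degree
      ≤ 0 + (l : WithBot ℕ) := by rw [h2]; exact add_le_add h1 h3
    _ = (l : WithBot ℕ) := by rw [zero_add]


/-- Proposition 3.2: structure of the trigonometric spectral curve.
Writing `w = coth z`, one has `det(2kI + A − wF) = Σ_{m=0}^{l} wᵐ R_m(k)`
with `deg R_m ≤ N − m`, `R₀(k) = det(2kI + A)` of degree exactly `N`, and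
`det(2kI + A + F) = det(2(k+2)I + A − F)` (the relation
`R(k, z = −∞) = R(k+2, z = +∞)`). -/
theorem trigonometric_spectral_curve (N l : ℕ)
    (x p : Fin N → ℂ) (a b : Fin N → Fin l → ℂ)
    (hx : ∀ i j : Fin N, i ≠ j → Complex.sinh (x i - x j) ≠ 0)
    (hba : ∀ i : Fin N, (∑ α : Fin l, b i α * a i α) = 2) :
    let F : Matrix (Fin N) (Fin N) ℂ := Matrix.of fun i j => ∑ α : Fin l, b i α * a j α
    let A : Matrix (Fin N) (Fin N) ℂ :=
      Matrix.of fun i j => if i = j then p i else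
        F i j * (Complex.cosh (x i - x j) / Complex.sinh (x i - x j))
    (∃ R : Fin (l + 1) → Polynomial ℂ,
        (∀ m : Fin (l + 1), (R m).degree ≤ (N - (m : ℕ) : ℕ)) ∧
        (∀ k : ℂ, (R 0).eval k
          = (Matrix.diagonal (fun _ => 2 * k) + A).det) ∧
        (R 0).degree = N ∧
        (∀ k w : ℂ,
          (Matrix.diagonal (fun _ => 2 * k) + A - w • F).det
            = ∑ m : Fin (l + 1), w ^ (m : ℕ) * (R m).eval k)) ∧
    (∀ k : ℂ,
      (Matrix.diagonal (fun _ => 2 * k) + A + F).det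
        = (Matrix.diagonal (fun _ => 2 * (k + 2)) + A - F).det) := by
  intro F A
  classical
  constructor
  · -- existence of the polynomials R
    have hF : ∀ i j, F i j = ∑ α : Fin l, b i α * a j α := fun i j => rfl
    have hA : ∀ i j, A i j = if i = j then p i else
        F i j * (Complex.cosh (x i - x j) / Complex.sinh (x i - x j)) := fun i j => rfl
    -- the matrix of polynomials in k (inner variable)
    set q : Matrix (Fin N) (Fin N) (Polynomial ℂ) :=
      Matrix.of (fun i j => if i = j then Polynomial.C 2 * Polynomial.X + Polynomial.C (p i)
        else Polynomial.C (A i j)) with hq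
    -- the matrix of polynomials in w (outer) over polynomials in k (inner)
    set M : Matrix (Fin N) (Fin N) (Polynomial (Polynomial ℂ)) :=
      Matrix.of (fun i j => Polynomial.C (q i j)
        - Polynomial.C (Polynomial.C (F i j)) * Polynomial.X) with hM
    set P : Polynomial (Polynomial ℂ) := M.det with hP
    have hqij : ∀ i j, (q i j).degree ≤ 1 := by
      intro i j
      rw [hq]
      by_cases h : i = j
      · simp only [Matrix.of_apply, if_pos h]
        refine (Polynomial.degree_add_le _ _).trans (max_le ?_ ?_)
        · exact Polynomial.degree_C_mul_X_le _
        · exact Polynomial.degree_C_le.trans (by norm_num)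
      · simp only [Matrix.of_apply, if_neg h]
        exact Polynomial.degree_C_le.trans (by norm_num)
    have hM0 : ∀ i j, (M i j).coeff 0 = q i j := by
      intro i j
      simp [hM]
    have hM1 : ∀ i j, (M i j).coeff 1 = -(Polynomial.C (F i j)) := by
      intro i j
      simp [hM, Polynomial.coeff_C]
    have hMd : ∀ i j, (M i j).degree ≤ 1 := by
      intro i j
      rw [hM]
      simp only [Matrix.of_apply]
      refine (Polynomial.degree_sub_le _ _).trans (max_le ?_ ?_)
      · exact Polynomial.degree_C_le.trans (by norm_num)
      · exact Polynomial.degree_C_mul_X_le _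
    -- degree bounds on coefficients
    have hcoeffdeg : ∀ m : ℕ, (P.coeff m).degree ≤ ((N - m : ℕ) : WithBot ℕ) := by
      intro m
      have := aux_coeff_det_degree M (fun i j => by rw [hM0]; exact hqij i j)
        (fun i j => by rw [hM1]; exact (Polynomial.degree_neg _).le.trans Polynomial.degree_C_le)
        hMd m
      simpa using this
    -- P.coeff 0 = q.det
    have hP0 : P.coeff 0 = q.det := by
      rw [Polynomial.coeff_zero_eq_eval_zero, hP]
      rw [show Polynomial.eval 0 M.det = (Polynomial.evalRingHom (0 : Polynomial ℂ)) M.det from rfl,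
        RingHom.map_det]
      congr 1
      ext i j
      simp [hM]
    -- q.det : relation with charpoly
    have h2i : (2:ℂ) * -2⁻¹ = -1 := by norm_num
    have hqchar : q = (Polynomial.C (2:ℂ)) • (charmatrix ((-(2⁻¹:ℂ)) • A)) := by
      apply Matrix.ext
      intro i j
      by_cases h : i = j
      · subst h
        rw [hq]
        simp only [Matrix.of_apply, if_pos rfl, Matrix.smul_apply, charmatrix_apply_eq,
          Matrix.smul_apply, smul_eq_mul]
        rw [hA, if_pos rfl, mul_sub, ← Polynomial.C_mul,
          show (2:ℂ) * (-2⁻¹ * p i) = -(p i) by rw [← mul_assoc, h2i]; ring, map_neg]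
        ring_nf
        simp
      · rw [hq]
        simp only [Matrix.of_apply, if_neg h, Matrix.smul_apply, charmatrix_apply_ne _ _ _ h,
          Matrix.smul_apply, smul_eq_mul]
        rw [show (Polynomial.C (2:ℂ)) * -Polynomial.C (-2⁻¹ * A i j)
            = Polynomial.C ((2:ℂ) * -(-2⁻¹ * A i j)) by rw [← map_neg, ← Polynomial.C_mul],
          show (2:ℂ) * -(-2⁻¹ * A i j) = A i j by rw [show -(-2⁻¹ * A i j) = 2⁻¹ * A i j by ring, ← mul_assoc]; norm_num]
    have hdegq : q.det.degree = (N : WithBot ℕ) := by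
      have h2 : ((Polynomial.C (2:ℂ)) ^ Fintype.card (Fin N)).degree = 0 := by
        rw [← map_pow, Polynomial.degree_C (pow_ne_zero _ two_ne_zero)]
      rw [hqchar, Matrix.det_smul, Polynomial.degree_mul, h2,
        show (charmatrix ((-(2⁻¹:ℂ)) • A)).det = Matrix.charpoly _ from rfl,
        Matrix.charpoly_degree_eq_dim, Fintype.card_fin, zero_add]
    have hqne : q.det ≠ 0 := by
      intro h
      rw [h, Polynomial.degree_zero] at hdegq
      exact (by simp : (⊥ : WithBot ℕ) ≠ (N : WithBot ℕ)) hdegq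
    -- rank argument: degree of P in the outer variable is at most l
    have hPdeg : P.degree ≤ (l : WithBot ℕ) := by
      set K := FractionRing (Polynomial ℂ) with hK
      set φ : Polynomial ℂ →+* K := algebraMap (Polynomial ℂ) K with hφdef
      have hφ : Function.Injective φ := IsFractionRing.injective (Polynomial ℂ) K
      rw [← Polynomial.degree_map_eq_of_injective hφ P]
      have hmapdet : P.map φ = (M.map (Polynomial.mapRingHom φ)).det := by
        rw [hP]; exact RingHom.map_det (Polynomial.mapRingHom φ) M
      set XK : Matrix (Fin N) (Fin N) K := q.map φ with hXK
      set BK : Matrix (Fin N) (Fin l) K := Matrix.of (fun i α => φ (Polynomial.C (b i α))) with hBK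
      set AK : Matrix (Fin l) (Fin N) K := Matrix.of (fun α j => φ (Polynomial.C (a j α))) with hAK
      have hXdetK : IsUnit XK.det := by
        have hdq : XK.det = φ q.det := (RingHom.map_det φ q).symm
        rw [hdq]
        exact isUnit_iff_ne_zero.2 (fun h => hqne (hφ (by rw [map_zero]; exact h)))
      have hBA : BK * AK = (Matrix.of fun i j => φ (Polynomial.C (F i j))) := by
        apply Matrix.ext
        intro i j
        rw [Matrix.mul_apply]
        simp only [hBK, hAK, Matrix.of_apply, hF]
        rw [map_sum (Polynomial.C : ℂ →+* Polynomial ℂ), map_sum φ]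
        refine Finset.sum_congr rfl fun α _ => ?_
        rw [map_mul (Polynomial.C : ℂ →+* Polynomial ℂ), map_mul φ]
      have hent : M.map (Polynomial.mapRingHom φ) = Matrix.of fun i j =>
          Polynomial.C (XK i j) - Polynomial.C ((BK * AK) i j) * Polynomial.X := by
        apply Matrix.ext
        intro i j
        simp only [Matrix.map_apply, hM, Matrix.of_apply, Polynomial.coe_mapRingHom]
        rw [Polynomial.map_sub, Polynomial.map_mul, Polynomial.map_C, Polynomial.map_C,
          Polynomial.map_X, hBA, hXK, Matrix.map_apply, Matrix.of_apply]
      rw [hmapdet, hent]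
      exact aux_rank_bound XK BK AK hXdetK
    refine ⟨fun m => P.coeff (m : ℕ), ?_, ?_, ?_, ?_⟩
    · intro m
      exact hcoeffdeg (m : ℕ)
    · intro k
      show (P.coeff ((0 : Fin (l+1)) : ℕ)).eval k = _
      rw [show ((0 : Fin (l+1)) : ℕ) = 0 from rfl, hP0,
        show (q.det).eval k = (Polynomial.evalRingHom k) q.det from rfl, RingHom.map_det]
      congr 1
      apply Matrix.ext
      intro i j
      by_cases h : i = j
      · subst h
        simp only [Matrix.map_apply, hq, Matrix.of_apply, if_pos rfl, Matrix.add_apply,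
          Matrix.diagonal_apply_eq, hA, Polynomial.coe_evalRingHom]
        simp
      · simp only [RingHom.mapMatrix_apply, Matrix.map_apply, hq, Matrix.of_apply, Matrix.add_apply,
          Matrix.diagonal_apply_ne _ h, Polynomial.coe_evalRingHom]
        rw [if_neg h, Polynomial.eval_C, zero_add]
    · show (P.coeff ((0 : Fin (l+1)) : ℕ)).degree = _
      rw [show ((0 : Fin (l+1)) : ℕ) = 0 from rfl, hP0]
      exact hdegq
    · intro k w
      set ψ : Polynomial (Polynomial ℂ) →+* ℂ :=
        (Polynomial.evalRingHom w).comp (Polynomial.mapRingHom (Polynomial.evalRingHom k)) with hψ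
      have hev : (Matrix.diagonal (fun _ => 2 * k) + A - w • F).det = ψ P := by
        rw [hP, RingHom.map_det]
        congr 1
        apply Matrix.ext
        intro i j
        simp only [RingHom.mapMatrix_apply, Matrix.map_apply, hM, Matrix.of_apply, hψ,
          RingHom.comp_apply, Polynomial.coe_mapRingHom, Polynomial.coe_evalRingHom]
        simp only [Polynomial.map_sub, Polynomial.map_mul, Polynomial.map_C, Polynomial.map_X,
          Polynomial.eval_sub, Polynomial.eval_mul, Polynomial.eval_C, Polynomial.eval_X]
        by_cases h : i = j
        · subst h
          simp only [hq, Matrix.of_apply, if_pos rfl, Matrix.sub_apply, Matrix.add_apply,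
            Matrix.diagonal_apply_eq, Matrix.smul_apply, smul_eq_mul, hA,
            Polynomial.coe_evalRingHom, Polynomial.eval_add, Polynomial.eval_mul,
            Polynomial.eval_C, Polynomial.eval_X]
          simp only [if_true, Polynomial.eval_add, Polynomial.eval_mul, Polynomial.eval_C,
            Polynomial.eval_X]
          ring
        · simp only [hq, Matrix.of_apply, if_neg h, Matrix.sub_apply, Matrix.add_apply,
            Matrix.diagonal_apply_ne _ h, Matrix.smul_apply, smul_eq_mul,
            Polynomial.coe_evalRingHom, Polynomial.eval_C]
          ring
      have hnat : (P.map (Polynomial.evalRingHom k)).natDegree < l + 1 := by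
        have h1 : (P.map (Polynomial.evalRingHom k)).degree ≤ (l : WithBot ℕ) :=
          le_trans (Polynomial.degree_map_le) hPdeg
        exact Nat.lt_succ_of_le (Polynomial.natDegree_le_iff_degree_le.2 h1)
      have hψeval : ψ P = Polynomial.eval w (P.map (Polynomial.evalRingHom k)) := rfl
      rw [hev, hψeval, Polynomial.eval_eq_sum_range' hnat,
        Fin.sum_univ_eq_sum_range (fun m => w ^ m * (P.coeff m).eval k) (l+1)]
      refine Finset.sum_congr rfl fun i hi => ?_
      rw [Polynomial.coeff_map, mul_comm]
      rfl
  · -- the relation R(k, -infty) = R(k+2, +infty)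
    have hF : ∀ i j, F i j = ∑ α : Fin l, b i α * a j α := fun i j => rfl
    have hA : ∀ i j, A i j = if i = j then p i else
        F i j * (Complex.cosh (x i - x j) / Complex.sinh (x i - x j)) := fun i j => rfl
    intro k
    set D := Matrix.diagonal (fun i : Fin N => Complex.exp (2 * x i)) with hD
    have hDdet : D.det ≠ 0 := by
      rw [hD, Matrix.det_diagonal]
      exact Finset.prod_ne_zero_iff.2 fun i _ => Complex.exp_ne_zero _
    have key : (Matrix.diagonal (fun _ => 2 * k) + A + F) * D
        = D * (Matrix.diagonal (fun _ => 2 * (k + 2)) + A - F) := by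
      ext i j
      rw [hD, Matrix.mul_diagonal, Matrix.diagonal_mul]
      by_cases hij : i = j
      · subst hij
        simp only [Matrix.add_apply, Matrix.sub_apply, Matrix.diagonal_apply_eq, hA, if_pos rfl]
        rw [hF, hba]
        ring
      · simp only [Matrix.add_apply, Matrix.sub_apply, Matrix.diagonal_apply_ne _ hij, hA,
          if_neg hij]
        have hs := hx i j hij
        have hexp : Complex.exp (x i - x j) * Complex.exp (2 * x j)
            = Complex.exp (2 * x i) * Complex.exp (-(x i - x j)) := by
          rw [← Complex.exp_add, ← Complex.exp_add]
          ring_nf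
        have main : (Complex.cosh (x i - x j) / Complex.sinh (x i - x j) + 1)
              * Complex.exp (2 * x j)
            = Complex.exp (2 * x i)
              * (Complex.cosh (x i - x j) / Complex.sinh (x i - x j) - 1) := by
          field_simp
          rw [Complex.cosh_add_sinh, Complex.cosh_sub_sinh, ← Complex.exp_add, ← Complex.exp_add]
          ring_nf
        calc (0 + F i j * (Complex.cosh (x i - x j) / Complex.sinh (x i - x j)) + F i j)
              * Complex.exp (2 * x j)
            = F i j * ((Complex.cosh (x i - x j) / Complex.sinh (x i - x j) + 1)
                * Complex.exp (2 * x j)) := by ring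
          _ = F i j * (Complex.exp (2 * x i)
                * (Complex.cosh (x i - x j) / Complex.sinh (x i - x j) - 1)) := by rw [main]
          _ = _ := by ring
    have := congrArg Matrix.det key
    rw [Matrix.det_mul, Matrix.det_mul] at this
    rw [mul_comm] at this
    exact mul_left_cancel₀ hDdet this
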